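/- Let p be an odd prime, G a finite abelian p-group of order n with exponent p^{t_m}, and let k be an integer with 2 ≤ k < n and p^{t_m} | k. Then for any x ∈ G, the incidence structure (G, B_k^x) is a 1-design. -/

import Mathlib

open Finset

/-- The family of `k`-element subsets of `G` whose elements sum to `x`. -/
def sumBlocks (G : Type) [AddCommGroup G] [Fintype G] [DecidableEq G]
    (k : ℕ) (x : G) : Finset (Finset G) :=
  Finset.univ.filter (fun T => T.card = k ∧ T.sum id = x)

/-- The family of `k`-element subsets of `G \ {0}` whose elements sum to `x`. -/
def sumBlocksStar (G : Type) [AddCommGroup G] [Fintype G] [DecidableEq G]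
    (k : ℕ) (x : G) : Finset (Finset G) :=
  Finset.univ.filter (fun T => T.card = k ∧ T.sum id = x ∧ (0 : G) ∉ T)

/-- `(G, B_k^x)` is a 1-design: the block family is nonempty and every
point of `G` lies in the same number of blocks. -/
def isOneDesign (G : Type) [AddCommGroup G] [Fintype G] [DecidableEq G]
    (k : ℕ) (x : G) : Prop :=
  sumBlocks G k x ≠ ∅ ∧ ∃ r : ℕ, ∀ y : G,
    ((sumBlocks G k x).filter (fun B => y ∈ B)).card = r

/-- `e(x) = max {d : d ∣ exp(G), x ∈ dG}`. -/
noncomputable def eMax (G : Type) [AddCommGroup G] [Fintype G] [DecidableEq G] (x : G) : ℕ :=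
  Nat.findGreatest (fun d => d ∣ AddMonoid.exponent G ∧ ∃ y : G, d • y = x)
    (AddMonoid.exponent G)

section Helpers

variable {G : Type} [AddCommGroup G] [Fintype G] [DecidableEq G]

lemma sum_univ_eq_zero_aux (no2 : ∀ c : G, c + c = 0 → c = 0) : (∑ a : G, a) = 0 := by
  have h : (∑ a : G, a) = ∑ a : G, -a :=
    Fintype.sum_equiv (Equiv.neg G) (fun a => a) (fun a => -a)
      (fun a => by show a = - (Equiv.neg G a); rw [Equiv.neg_apply, neg_neg])
  rw [Finset.sum_neg_distrib] at h
  exact no2 _ (by nth_rewrite 2 [h]; simp)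

lemma exists_sum_small (no2 : ∀ c : G, c + c = 0 → c = 0) :
    ∀ j : ℕ, j ≠ 0 → 2 * j ≤ Fintype.card G + 1 → ∀ x : G,
      ∃ T : Finset G, T.card = j ∧ T.sum id = x := by
  intro j
  induction j with
  | zero => intro h; exact absurd rfl h
  | succ j ih =>
    intro _ hle x
    rcases Nat.eq_zero_or_pos j with rfl | hj
    · exact ⟨{x}, by simp, by simp⟩
    obtain ⟨S, hS, hsum⟩ := ih (by omega) (by omega) x
    by_cases h0 : (0 : G) ∈ S
    · have hcardU : (S ∪ S.image (fun a => -a)).card < Fintype.card G := by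
        have h1 := Finset.card_union_le S (S.image (fun a => -a))
        have h2 := Finset.card_image_le (s := S) (f := fun a : G => -a)
        omega
      obtain ⟨c, hc⟩ : ∃ c : G, c ∉ S ∪ S.image (fun a => -a) := by
        by_contra hcon
        push_neg at hcon
        have hsub : (univ : Finset G) ⊆ S ∪ S.image (fun a => -a) := fun c _ => hcon c
        have := Finset.card_le_card hsub
        rw [Finset.card_univ] at this
        omega
      simp only [Finset.mem_union, Finset.mem_image, not_or, not_exists] at hc
      obtain ⟨hc1, hc2⟩ := hc
      have hnc : -c ∉ S := by
        intro h
        have := hc2 (-c)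
        simp [h] at this
      have hcne : c ≠ -c := by
        intro h
        have hc0 : c = 0 := no2 c (by nth_rewrite 2 [h]; simp)
        exact hc1 (hc0 ▸ h0)
      have hc0' : c ≠ 0 := fun h => hc1 (h ▸ h0)
      have hncmem : -c ∉ S.erase 0 := fun h => hnc (Finset.mem_of_mem_erase h)
      have hcmem : c ∉ insert (-c) (S.erase 0) := by
        simp only [Finset.mem_insert]
        rintro (h | h)
        · exact hcne h
        · exact hc1 (Finset.mem_of_mem_erase h)
      refine ⟨insert c (insert (-c) (S.erase 0)), ?_, ?_⟩
      · rw [Finset.card_insert_of_notMem hcmem, Finset.card_insert_of_notMem hncmem,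
          Finset.card_erase_of_mem h0, hS]
        omega
      · rw [Finset.sum_insert hcmem, Finset.sum_insert hncmem,
          Finset.sum_erase _ (by simp : id (0 : G) = 0), hsum]
        simp
    · refine ⟨insert 0 S, ?_, ?_⟩
      · rw [Finset.card_insert_of_notMem h0, hS]
      · rw [Finset.sum_insert h0, hsum]; simp

lemma exists_sum_eq (no2 : ∀ c : G, c + c = 0 → c = 0) (j : ℕ) (h1 : 1 ≤ j)
    (h2 : j < Fintype.card G) (x : G) :
    ∃ T : Finset G, T.card = j ∧ T.sum id = x := by
  by_cases h : 2 * j ≤ Fintype.card G + 1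
  · exact exists_sum_small no2 j (by omega) h x
  · obtain ⟨T, hT, hs⟩ := exists_sum_small no2 (Fintype.card G - j) (by omega) (by omega) (-x)
    refine ⟨Tᶜ, ?_, ?_⟩
    · rw [Finset.card_compl, hT]
      omega
    · have hcompl := Finset.sum_compl_add_sum T (id : G → G)
      have huniv : (∑ a : G, id a) = 0 := sum_univ_eq_zero_aux no2
      rw [hs, huniv] at hcompl
      exact (add_neg_eq_zero.mp hcompl)

end Helpers

theorem stmt3 (p tm : ℕ) (hp : p.Prime) (hodd : Odd p)
    (G : Type) [AddCommGroup G] [Fintype G] [DecidableEq G]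
    (hexp : AddMonoid.exponent G = p ^ tm)
    (k : ℕ) (hk2 : 2 ≤ k) (hkn : k < Fintype.card G)
    (hdvd : p ^ tm ∣ k) (x : G) :
    isOneDesign G k x := by
  have hkexp : ∀ g : G, k • g = 0 := by
    intro g
    exact AddMonoid.exponent_dvd_iff_forall_nsmul_eq_zero.mp (hexp ▸ hdvd) g
  have no2 : ∀ c : G, c + c = 0 → c = 0 := by
    intro c hc
    have h1 : addOrderOf c ∣ 2 := addOrderOf_dvd_of_nsmul_eq_zero (by rw [two_nsmul]; exact hc)
    have h2 : addOrderOf c ∣ p ^ tm := hexp ▸ AddMonoid.addOrder_dvd_exponent c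
    have hcop : Nat.Coprime 2 (p ^ tm) := Nat.coprime_two_left.mpr hodd.pow
    have h3 : addOrderOf c ∣ 1 := hcop ▸ Nat.dvd_gcd h1 h2
    exact AddMonoid.addOrderOf_eq_one_iff.mp (Nat.dvd_one.mp h3)
  constructor
  · obtain ⟨T, hT, hs⟩ := exists_sum_eq no2 k (by omega) hkn x
    have : T ∈ sumBlocks G k x := by
      simp only [sumBlocks, Finset.mem_filter, Finset.mem_univ, true_and]
      exact ⟨hT, hs⟩
    exact Finset.ne_empty_of_mem this
  · refine ⟨((sumBlocks G k x).filter (fun B => (0 : G) ∈ B)).card, fun y => ?_⟩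
    have key : ∀ (z : G) (B : Finset G), B ∈ sumBlocks G k x →
        B.image (fun a => a + z) ∈ sumBlocks G k x := by
      intro z B hB
      simp only [sumBlocks, Finset.mem_filter, Finset.mem_univ, true_and] at hB ⊢
      obtain ⟨hcard, hsum⟩ := hB
      have hinj : Function.Injective (fun a : G => a + z) := fun a b h => by simpa using h
      constructor
      · rw [Finset.card_image_of_injective _ hinj, hcard]
      · rw [Finset.sum_image (fun a _ b _ h => hinj h)]
        simp only [id_eq] at hsum ⊢
        rw [Finset.sum_add_distrib, Finset.sum_const, hcard, hsum, hkexp z, add_zero]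
    refine Finset.card_nbij' (i := fun B => B.image (fun a => a + (-y)))
      (j := fun B => B.image (fun a => a + y)) ?_ ?_ ?_ ?_
    · intro B hB
      rw [Finset.mem_coe, Finset.mem_filter] at hB ⊢
      refine ⟨key _ _ hB.1, ?_⟩
      simp only [Finset.mem_image]
      exact ⟨y, hB.2, by simp⟩
    · intro B hB
      rw [Finset.mem_coe, Finset.mem_filter] at hB ⊢
      refine ⟨key _ _ hB.1, ?_⟩
      simp only [Finset.mem_image]
      exact ⟨0, hB.2, by simp⟩
    · intro B _
      ext a
      simp [Finset.mem_image]
    · intro B _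
      ext a
      simp [Finset.mem_image]
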